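/- For every classical propositional formula α whose propositional symbols are contained in {B_1,…,B_n}, Prob(α) = Σ_{v' : {1,…,n} → {0,1}, v' ⊨ α} |f(v')|². -/
import Mathlib


open scoped InnerProductSpace

noncomputable section

/-- Classical propositional formulas, built from propositional symbols `B_j` (`j : ℕ`)
and `⊤` using `¬` and `→`. -/
inductive PropForm : Type
  | verum : PropForm
  | var : ℕ → PropForm
  | neg : PropForm → PropForm
  | imp : PropForm → PropForm → PropForm

namespace PropForm

/-- The (finite) set of propositional symbols occurring in a formula. -/
def symbols : PropForm → Finset ℕ
  | verum => ∅
  | var n => {n}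
  | neg a => a.symbols
  | imp a b => a.symbols ∪ b.symbols

/-- Truth-table evaluation of a formula under a (total) assignment of truth values. -/
def eval (w : ℕ → Bool) : PropForm → Bool
  | verum => true
  | var n => w n
  | neg a => !(a.eval w)
  | imp a b => !(a.eval w) || b.eval w

end PropForm

/-- A valuation `v` on a set `A` of propositional symbols (with `A ⊇ B_α`) satisfies `α`. -/
def Sat (A : Finset ℕ) (v : {k // k ∈ A} → Bool) (α : PropForm) : Prop :=
  PropForm.eval (fun k => if h : k ∈ A then v ⟨k, h⟩ else false) α = true

instance (A : Finset ℕ) (α : PropForm) : DecidablePred (fun v => Sat A v α) := fun _ => by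
  unfold Sat; infer_instance

variable {H : Type*} [NormedAddCommGroup H] [InnerProductSpace ℂ H] [CompleteSpace H]

/-- The rank-one operator `|x⟩⟨y| : z ↦ ⟨y, z⟩ • x`. -/
def ketbra (x y : H) : H →L[ℂ] H :=
  (innerSL ℂ y).smulRight x

/-- `wvec a b = (1/√2)·(a + b)`. -/
def wvec (a b : H) : H :=
  ((Real.sqrt 2 : ℂ))⁻¹ • (a + b)

/-- The projection `Q_j` associated with the propositional symbol `B_j`: a two-element
subset `{min A, max A}` in `NC` is encoded as the ordered pair `p = (min A, max A)` with
`p.1 < p.2`. -/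
def Qop (n : ℕ) (NC : Finset (Fin n × Fin n)) (u : (Fin n → Bool) → H)
    (a b : Fin n × Fin n → H) (j : Fin n) : H →L[ℂ] H :=
  (∑ v ∈ Finset.univ.filter (fun v : Fin n → Bool => v j = true), ketbra (u v) (u v)) +
    ∑ p ∈ NC,
      (if j = p.1 then ketbra (wvec (a p) (b p)) (wvec (a p) (b p))
       else if j = p.2 then ketbra (b p) (b p)
       else ketbra (a p) (a p) + ketbra (b p) (b p))

/-- The family consisting of the vectors `u_v` together with `a_A, b_A` for `A ∈ NC`. -/
def fam (n : ℕ) (NC : Finset (Fin n × Fin n)) (u : (Fin n → Bool) → H)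
    (a b : Fin n × Fin n → H) : ((Fin n → Bool) ⊕ ({p // p ∈ NC} × Bool)) → H
  | .inl v => u v
  | .inr (p, d) => if d then b p.1 else a p.1

/-- The probability of the classical formula `α` in the state `ψ = Σ_v f(v)·u_v`:
the sum, over valuations `v` on `B_α` satisfying `α`, of
`Re ⟪ψ, T_{j_k}^v(⋯ (T_{j_1}^v ψ) ⋯)⟫` where `B_α = {j_1 < … < j_k}` and
`T_j^v = Q_j` when `v(j) = 1` and `T_j^v = id − Q_j` otherwise. -/
def ProbQ (n : ℕ) (NC : Finset (Fin n × Fin n)) (u : (Fin n → Bool) → H)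
    (a b : Fin n × Fin n → H) (f : (Fin n → Bool) → ℂ) (α : PropForm) : ℝ :=
  let ψ : H := ∑ v : Fin n → Bool, f v • u v
  ∑ v ∈ Finset.univ.filter (fun v : {k // k ∈ α.symbols} → Bool => Sat α.symbols v α),
    (⟪ψ, (α.symbols.sort (· ≤ ·)).foldl
        (fun x s => if hs : s ∈ α.symbols then
            if hsn : s < n then
              (if v ⟨s, hs⟩ then Qop n NC u a b ⟨s, hsn⟩ x
               else x - Qop n NC u a b ⟨s, hsn⟩ x)
            else x
          else x) ψ⟫_ℂ).re

-- AUX START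
lemma eval_congr (α : PropForm) (w w' : ℕ → Bool) (h : ∀ s ∈ α.symbols, w s = w' s) :
    α.eval w = α.eval w' := by
  induction α with
  | verum => rfl
  | var k => exact h k (by simp [PropForm.symbols])
  | neg a ih =>
    simp [PropForm.eval, ih (fun s hs => h s (by simpa [PropForm.symbols] using hs))]
  | imp a b iha ihb =>
    simp [PropForm.eval,
      iha (fun s hs => h s (by simp [PropForm.symbols, hs])),
      ihb (fun s hs => h s (by simp [PropForm.symbols, hs]))]

lemma ketbra_apply (x y z : H) : ketbra x y z = ⟪y, z⟫_ℂ • x := rfl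

section main
variable (n : ℕ) (NC : Finset (Fin n × Fin n)) (u : (Fin n → Bool) → H)
  (a b : Fin n × Fin n → H) (f : (Fin n → Bool) → ℂ)

lemma inner_u_u (hon : Orthonormal ℂ (fam n NC u a b)) (v w : Fin n → Bool) :
    ⟪u v, u w⟫_ℂ = if v = w then 1 else 0 := by
  have := orthonormal_iff_ite.mp hon (Sum.inl v) (Sum.inl w)
  simpa [fam] using this

lemma inner_a_u (hon : Orthonormal ℂ (fam n NC u a b)) {p : Fin n × Fin n} (hp : p ∈ NC)
    (w : Fin n → Bool) : ⟪a p, u w⟫_ℂ = 0 := by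
  have := orthonormal_iff_ite.mp hon (Sum.inr (⟨p, hp⟩, false)) (Sum.inl w)
  simpa [fam] using this

lemma inner_b_u (hon : Orthonormal ℂ (fam n NC u a b)) {p : Fin n × Fin n} (hp : p ∈ NC)
    (w : Fin n → Bool) : ⟪b p, u w⟫_ℂ = 0 := by
  have := orthonormal_iff_ite.mp hon (Sum.inr (⟨p, hp⟩, true)) (Sum.inl w)
  simpa [fam] using this

lemma Qop_apply_u (hon : Orthonormal ℂ (fam n NC u a b)) (j : Fin n) (w : Fin n → Bool) :
    Qop n NC u a b j (u w) = if w j = true then u w else 0 := by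
  classical
  simp only [Qop, ContinuousLinearMap.add_apply, ContinuousLinearMap.sum_apply]
  have h2 : ∑ p ∈ NC,
      ((if j = p.1 then ketbra (wvec (a p) (b p)) (wvec (a p) (b p))
        else if j = p.2 then ketbra (b p) (b p)
        else ketbra (a p) (a p) + ketbra (b p) (b p)) (u w)) = 0 := by
    refine Finset.sum_eq_zero fun p hp => ?_
    split_ifs <;>
      simp [ketbra_apply, wvec, inner_smul_left, inner_add_left,
        inner_a_u n NC u a b hon hp, inner_b_u n NC u a b hon hp,
        ContinuousLinearMap.add_apply]
  rw [h2, add_zero]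
  have h1 : ∀ v : Fin n → Bool, ketbra (u v) (u v) (u w)
      = if v = w then u v else 0 := by
    intro v
    rw [ketbra_apply, inner_u_u n NC u a b hon]
    split_ifs <;> simp
  simp only [h1]
  rw [Finset.sum_ite_eq']
  simp

lemma Qop_sum (hon : Orthonormal ℂ (fam n NC u a b)) (j : Fin n)
    (S : Finset (Fin n → Bool)) :
    Qop n NC u a b j (∑ v ∈ S, f v • u v)
      = ∑ v ∈ S.filter (fun v => v j = true), f v • u v := by
  classical
  rw [map_sum, Finset.sum_filter]
  refine Finset.sum_congr rfl fun v _ => ?_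
  rw [map_smul, Qop_apply_u n NC u a b hon]
  split_ifs <;> simp

lemma Qop_sum_not (hon : Orthonormal ℂ (fam n NC u a b)) (j : Fin n)
    (S : Finset (Fin n → Bool)) :
    (∑ v ∈ S, f v • u v) - Qop n NC u a b j (∑ v ∈ S, f v • u v)
      = ∑ v ∈ S.filter (fun v => v j = false), f v • u v := by
  classical
  rw [Qop_sum n NC u a b f hon]
  have h := Finset.sum_filter_add_sum_filter_not S (fun v => v j = true)
    (fun v => f v • u v)
  have h2 : S.filter (fun v => ¬ v j = true) = S.filter (fun v => v j = false) := by
    apply Finset.filter_congr; intro v _; simp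
  rw [h2] at h
  rw [sub_eq_iff_eq_add, ← h, add_comm]

variable (α : PropForm)

/-- agreement of a total valuation with a partial valuation at symbol `s` -/
def agreeAt (vp : {k // k ∈ α.symbols} → Bool) (v : Fin n → Bool) (s : ℕ) : Prop :=
  (if h : s < n then v ⟨s, h⟩ else false) = (if h : s ∈ α.symbols then vp ⟨s, h⟩ else false)

instance (vp : {k // k ∈ α.symbols} → Bool) (v : Fin n → Bool) (s : ℕ) :
    Decidable (agreeAt n α vp v s) := by unfold agreeAt; infer_instance

lemma fold_eq (hon : Orthonormal ℂ (fam n NC u a b))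
    (hsym : ∀ s ∈ α.symbols, s < n)
    (vp : {k // k ∈ α.symbols} → Bool)
    (l : List ℕ) (hl : ∀ s ∈ l, s ∈ α.symbols) (S : Finset (Fin n → Bool)) :
    l.foldl (fun x s => if hs : s ∈ α.symbols then
            if hsn : s < n then
              (if vp ⟨s, hs⟩ then Qop n NC u a b ⟨s, hsn⟩ x
               else x - Qop n NC u a b ⟨s, hsn⟩ x)
            else x
          else x) (∑ v ∈ S, f v • u v)
      = ∑ v ∈ S.filter (fun v => ∀ s ∈ l, agreeAt n α vp v s), f v • u v := by
  classical
  induction l generalizing S with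
  | nil => simp
  | cons s t ih =>
    have hs : s ∈ α.symbols := hl s (by simp)
    have hsn : s < n := hsym s hs
    rw [List.foldl_cons, dif_pos hs, dif_pos hsn]
    have hfilter : ∀ c : Bool, vp ⟨s, hs⟩ = c →
        S.filter (fun v => v ⟨s, hsn⟩ = c) = S.filter (fun v => agreeAt n α vp v s) := by
      intro c hc
      apply Finset.filter_congr
      intro v _
      unfold agreeAt
      rw [dif_pos hsn, dif_pos hs, hc]
    by_cases hc : vp ⟨s, hs⟩
    · rw [if_pos hc, Qop_sum n NC u a b f hon, hfilter true hc,
        ih (fun x hx => hl x (by simp [hx])), Finset.filter_filter]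
      refine Finset.sum_congr ?_ fun _ _ => rfl
      apply Finset.filter_congr
      intro v _
      simp [List.forall_mem_cons, and_comm]
    · rw [if_neg hc, Qop_sum_not n NC u a b f hon,
        hfilter false (by simpa using hc),
        ih (fun x hx => hl x (by simp [hx])), Finset.filter_filter]
      refine Finset.sum_congr ?_ fun _ _ => rfl
      apply Finset.filter_congr
      intro v _
      simp [List.forall_mem_cons, and_comm]

lemma inner_psi_sum (hon : Orthonormal ℂ (fam n NC u a b)) (S : Finset (Fin n → Bool)) :
    (⟪∑ w : Fin n → Bool, f w • u w, ∑ v ∈ S, f v • u v⟫_ℂ).re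
      = ∑ v ∈ S, ‖f v‖ ^ 2 := by
  classical
  rw [inner_sum]
  have h : ∀ v ∈ S, ⟪∑ w : Fin n → Bool, f w • u w, f v • u v⟫_ℂ = (‖f v‖ : ℂ) ^ 2 := by
    intro v _
    rw [inner_smul_right, sum_inner]
    simp only [inner_smul_left, inner_u_u n NC u a b hon, mul_ite, mul_one, mul_zero]
    rw [Finset.sum_ite_eq' Finset.univ v (fun w => (starRingEnd ℂ) (f w)),
      if_pos (Finset.mem_univ v), Complex.mul_conj']
  rw [Finset.sum_congr rfl h, Complex.re_sum]
  exact Finset.sum_congr rfl fun v _ => by rw [← Complex.ofReal_pow, Complex.ofReal_re]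
  
end main

/-- For a formula `α` with symbols among `B_1, …, B_n`,
`Prob(α) = Σ_{v' : {1,…,n} → {0,1}, v' ⊨ α} |f(v')|²`. -/
theorem stmt11 (n : ℕ) (hn : 1 ≤ n) (NC : Finset (Fin n × Fin n))
    (hNC : ∀ p ∈ NC, p.1 < p.2)
    (u : (Fin n → Bool) → H) (a b : Fin n × Fin n → H)
    (hon : Orthonormal ℂ (fam n NC u a b))
    (htot : (Submodule.span ℂ (Set.range (fam n NC u a b))).topologicalClosure = ⊤)
    (f : (Fin n → Bool) → ℂ) (hf : ∑ v : Fin n → Bool, ‖f v‖ ^ 2 = 1)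
    (α : PropForm) (hsym : ∀ s ∈ α.symbols, s < n) :
    ProbQ n NC u a b f α =
      ∑ v' ∈ Finset.univ.filter (fun v' : Fin n → Bool =>
          PropForm.eval (fun k => if h : k < n then v' ⟨k, h⟩ else false) α = true),
        ‖f v'‖ ^ 2 := by
  classical
  set restrict : (Fin n → Bool) → ({k // k ∈ α.symbols} → Bool) :=
    fun v k => v ⟨k.1, hsym k.1 k.2⟩ with hrestrict
  have hsat : ∀ v : Fin n → Bool,
      Sat α.symbols (restrict v) α ↔
        PropForm.eval (fun k => if h : k < n then v ⟨k, h⟩ else false) α = true := by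
    intro v
    unfold Sat
    rw [eval_congr α (fun k => if h : k ∈ α.symbols then restrict v ⟨k, h⟩ else false)
      (fun k => if h : k < n then v ⟨k, h⟩ else false) ?_]
    intro s hs
    show (if h : s ∈ α.symbols then restrict v ⟨s, h⟩ else false)
        = (if h : s < n then v ⟨s, h⟩ else false)
    rw [dif_pos hs, dif_pos (hsym s hs)]
  have hagree : ∀ (vp : {k // k ∈ α.symbols} → Bool) (v : Fin n → Bool),
      (∀ s ∈ α.symbols.sort (· ≤ ·), agreeAt n α vp v s) ↔ restrict v = vp := by
    intro vp v
    constructor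
    · intro h
      funext k
      have := h k.1 ((Finset.mem_sort _).mpr k.2)
      unfold agreeAt at this
      rw [dif_pos (hsym k.1 k.2), dif_pos k.2] at this
      simpa [hrestrict] using this
    · intro h s hs
      have hs' : s ∈ α.symbols := (Finset.mem_sort _).mp hs
      unfold agreeAt
      rw [dif_pos (hsym s hs'), dif_pos hs', ← h]
  have key : ∀ vp : {k // k ∈ α.symbols} → Bool,
      (⟪∑ v : Fin n → Bool, f v • u v, (α.symbols.sort (· ≤ ·)).foldl
        (fun x s => if hs : s ∈ α.symbols then
            if hsn : s < n then
              (if vp ⟨s, hs⟩ then Qop n NC u a b ⟨s, hsn⟩ x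
               else x - Qop n NC u a b ⟨s, hsn⟩ x)
            else x
          else x) (∑ v : Fin n → Bool, f v • u v)⟫_ℂ).re
      = ∑ v ∈ Finset.univ.filter (fun v => restrict v = vp), ‖f v‖ ^ 2 := by
    intro vp
    rw [fold_eq n NC u a b f α hon hsym vp (α.symbols.sort (· ≤ ·))
      (fun s hs => (Finset.mem_sort _).mp hs) Finset.univ,
      inner_psi_sum n NC u a b f hon]
    refine Finset.sum_congr ?_ fun _ _ => rfl
    apply Finset.filter_congr
    intro v _
    exact hagree vp v
  simp only [ProbQ]
  rw [Finset.sum_congr rfl (fun vp _ => key vp)]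
  rw [← Finset.sum_fiberwise_of_maps_to (g := restrict)
    (t := Finset.univ.filter (fun vp => Sat α.symbols vp α))
    (fun v hv => by
      simp only [Finset.mem_filter, Finset.mem_univ, true_and] at hv ⊢
      exact (hsat v).mpr hv)
    (fun v => ‖f v‖ ^ 2)]
  refine Finset.sum_congr rfl fun vp hvp => ?_
  refine Finset.sum_congr ?_ fun _ _ => rfl
  simp only [Finset.mem_filter, Finset.mem_univ, true_and] at hvp
  ext v
  simp only [Finset.mem_filter, Finset.mem_univ, true_and]
  exact ⟨fun h => ⟨(hsat v).mp (h ▸ hvp), h⟩, fun h => h.2⟩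


end
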